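/- Let (Ā, B̄) be a stabilizable pair of real matrices and let P̄ be the unique symmetric positive definite solution of the algebraic Riccati equation Āᵀ P̄ + P̄ Ā − P̄ B̄ B̄ᵀ P̄ + I = 0. If K̄ = σ⁻¹ B̄ᵀ P̄ with 0 < σ ≤ min_{i≥2} Re(λ_i(L)), then the matrix Ā − λ_i(L) B̄ K̄ is Hurwitz (all eigenvalues have negative real part) for every i ∈ {2,...,N}. -/

import Mathlib

open scoped Matrix

/-- A (possibly complex) square matrix is Hurwitz if every eigenvalue has
negative real part. -/
def IsHurwitz {n : ℕ} (M : Matrix (Fin n) (Fin n) ℂ) : Prop :=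
  ∀ μ ∈ spectrum ℂ M, μ.re < 0

/-- Complexification preserves positivity of the quadratic form of a real
positive definite matrix. -/
lemma posdef_complexify {n : ℕ} (P : Matrix (Fin n) (Fin n) ℝ) (hP : P.PosDef)
    (v : Fin n → ℂ) (hv : v ≠ 0) :
    0 < (dotProduct (star v) ((P.map Complex.ofReal) *ᵥ v)).re := by
  classical
  set a : Fin n → ℝ := fun j => (v j).re
  set b : Fin n → ℝ := fun j => (v j).im
  have key : (dotProduct (star v) ((P.map Complex.ofReal) *ᵥ v)).re
      = dotProduct a (P *ᵥ a) + dotProduct b (P *ᵥ b) := by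
    simp only [dotProduct, Matrix.mulVec, Matrix.map_apply, Pi.star_apply,
      Complex.re_sum, Finset.mul_sum, ← Finset.sum_add_distrib, Complex.mul_re,
      Complex.mul_im, Complex.ofReal_re, Complex.ofReal_im, RCLike.star_def,
      Complex.conj_re, Complex.conj_im, a, b]
    apply Finset.sum_congr rfl; intro j _
    apply Finset.sum_congr rfl; intro k _
    ring
  rw [key]
  have hab : a ≠ 0 ∨ b ≠ 0 := by
    by_contra h
    push_neg at h
    apply hv
    funext j
    have h1 := congrFun h.1 j
    have h2 := congrFun h.2 j
    simp [a, b] at h1 h2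
    exact Complex.ext h1 h2
  have ha' : ∀ x : Fin n → ℝ, 0 ≤ dotProduct x (P *ᵥ x) := by
    intro x; simpa using hP.posSemidef.dotProduct_mulVec_nonneg x
  have hs : ∀ x : Fin n → ℝ, x ≠ 0 → 0 < dotProduct x (P *ᵥ x) := by
    intro x hx; simpa using hP.dotProduct_mulVec_pos hx
  rcases hab with h | h
  · have := hs a h; have := ha' b; linarith
  · have := hs b h; have := ha' a; linarith

/-- Eigenvector extraction from spectrum membership. -/
lemma exists_eigenvector {n : ℕ} (M : Matrix (Fin n) (Fin n) ℂ) (μ : ℂ)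
    (hμ : μ ∈ spectrum ℂ M) : ∃ v : Fin n → ℂ, v ≠ 0 ∧ M *ᵥ v = μ • v := by
  classical
  rw [spectrum.mem_iff] at hμ
  have hdet : (algebraMap ℂ (Matrix (Fin n) (Fin n) ℂ) μ - M).det = 0 := by
    by_contra h
    exact hμ ((Matrix.isUnit_iff_isUnit_det _).mpr (isUnit_iff_ne_zero.mpr h))
  obtain ⟨v, hv0, hv⟩ := Matrix.exists_mulVec_eq_zero_iff.mpr hdet
  refine ⟨v, hv0, ?_⟩
  have h1 : (algebraMap ℂ (Matrix (Fin n) (Fin n) ℂ) μ) *ᵥ v - M *ᵥ v = 0 := by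
    rw [← Matrix.sub_mulVec]; exact hv
  have h2 : M *ᵥ v = (algebraMap ℂ (Matrix (Fin n) (Fin n) ℂ) μ) *ᵥ v := by
    linear_combination (norm := module) -h1
  rw [h2]
  funext j; simp [Matrix.algebraMap_eq_diagonal, Matrix.mulVec_diagonal]

lemma real_smul_map {k n : ℕ} (c : ℝ) (M : Matrix (Fin k) (Fin n) ℝ) :
    (c • M).map Complex.ofReal = (c : ℂ) • M.map Complex.ofReal := by
  ext j l; simp [Matrix.map_apply]

lemma conjTranspose_real_map {k n : ℕ} (M : Matrix (Fin k) (Fin n) ℝ) :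
    (M.map Complex.ofReal)ᴴ = Mᵀ.map Complex.ofReal := by
  ext j l; simp [Matrix.conjTranspose_apply, Matrix.map_apply]


lemma real_map_mul {a b c : ℕ} (M : Matrix (Fin a) (Fin b) ℝ) (N : Matrix (Fin b) (Fin c) ℝ) :
    (M * N).map Complex.ofReal = M.map Complex.ofReal * N.map Complex.ofReal := by
  ext j l; simp [Matrix.mul_apply, Matrix.map_apply]

lemma real_map_add {a b : ℕ} (M N : Matrix (Fin a) (Fin b) ℝ) :
    (M + N).map Complex.ofReal = M.map Complex.ofReal + N.map Complex.ofReal := by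
  ext j l; simp [Matrix.map_apply]

lemma real_map_sub {a b : ℕ} (M N : Matrix (Fin a) (Fin b) ℝ) :
    (M - N).map Complex.ofReal = M.map Complex.ofReal - N.map Complex.ofReal := by
  ext j l; simp [Matrix.map_apply]

lemma real_map_one {a : ℕ} :
    (1 : Matrix (Fin a) (Fin a) ℝ).map Complex.ofReal = 1 := by
  ext j l
  by_cases h : j = l <;> simp [Matrix.map_apply, Matrix.one_apply, h]

lemma real_map_zero {a b : ℕ} :
    (0 : Matrix (Fin a) (Fin b) ℝ).map Complex.ofReal = 0 := by
  ext j l; simp [Matrix.map_apply]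

set_option maxHeartbeats 1000000 in
/-- Lemma 1: synchronization gain from the ARE renders
Ā − λ_i(L) B̄ K̄ Hurwitz for all i ≥ 2. -/
theorem stmt_2 {nb mb N : ℕ}
    (Abar : Matrix (Fin nb) (Fin nb) ℝ) (Bbar : Matrix (Fin nb) (Fin mb) ℝ)
    -- (Ā, B̄) stabilizable
    (hstab : ∃ K : Matrix (Fin mb) (Fin nb) ℝ,
      IsHurwitz ((Abar - Bbar * K).map Complex.ofReal))
    -- P̄ symmetric positive definite solution of the ARE
    (Pbar : Matrix (Fin nb) (Fin nb) ℝ) (hP : Pbar.PosDef)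
    (hare : Abarᵀ * Pbar + Pbar * Abar - Pbar * Bbar * Bbarᵀ * Pbar + 1 = 0)
    -- eigenvalues of the Laplacian L: λ 0 = 0, Re λ i > 0 for i ≠ 0
    (L : Matrix (Fin N) (Fin N) ℝ) (lam : Fin N → ℂ)
    (hlam : ∀ i, lam i ∈ spectrum ℂ (L.map Complex.ofReal))
    (hN : 0 < N) (h0 : lam ⟨0, hN⟩ = 0)
    (hpos : ∀ i, i ≠ ⟨0, hN⟩ → 0 < (lam i).re)
    -- the gain K̄ = σ⁻¹ B̄ᵀ P̄ with 0 < σ ≤ min_{i≥2} Re λ_i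
    (σ : ℝ) (hσ : 0 < σ) (hσle : ∀ i, i ≠ ⟨0, hN⟩ → σ ≤ (lam i).re)
    (Kbar : Matrix (Fin mb) (Fin nb) ℝ) (hK : Kbar = σ⁻¹ • (Bbarᵀ * Pbar)) :
    ∀ i, i ≠ (⟨0, hN⟩ : Fin N) →
      IsHurwitz ((Abar.map Complex.ofReal) - lam i • ((Bbar * Kbar).map Complex.ofReal)) := by
  classical
  intro i hi μ hμ
  set A : Matrix (Fin nb) (Fin nb) ℂ := Abar.map Complex.ofReal with hAdef
  set B : Matrix (Fin nb) (Fin mb) ℂ := Bbar.map Complex.ofReal with hBdef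
  set Bt : Matrix (Fin mb) (Fin nb) ℂ := Bbarᵀ.map Complex.ofReal with hBtdef
  set P : Matrix (Fin nb) (Fin nb) ℂ := Pbar.map Complex.ofReal with hPdef
  set lc : ℂ := lam i with hlc
  -- the complexified ARE
  have hareC : (Abarᵀ.map Complex.ofReal) * P + P * A - P * B * Bt * P + 1 = 0 := by
    have h := congrArg (fun X : Matrix (Fin nb) (Fin nb) ℝ => X.map Complex.ofReal) hare
    simpa [real_map_add, real_map_sub, real_map_mul, real_map_one, real_map_zero,
      hAdef, hBdef, hBtdef, hPdef] using h
  -- rewrite the matrix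
  have hMeq : (Abar.map Complex.ofReal) - lam i • ((Bbar * Kbar).map Complex.ofReal)
      = A - (lc * (σ⁻¹ : ℝ)) • (B * Bt * P) := by
    rw [hK]
    have h1 : Bbar * (σ⁻¹ • (Bbarᵀ * Pbar)) = σ⁻¹ • (Bbar * Bbarᵀ * Pbar) := by
      rw [Matrix.mul_smul, Matrix.mul_assoc]
    rw [h1, real_smul_map]
    have hmm : (Bbar * Bbarᵀ * Pbar).map Complex.ofReal = B * Bt * P := by
      simp [hBdef, hBtdef, hPdef, real_map_mul]
    rw [hmm, smul_smul, mul_comm]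
  rw [hMeq] at hμ
  set c : ℂ := lc * (σ⁻¹ : ℝ) with hc
  set G : Matrix (Fin nb) (Fin nb) ℂ := B * Bt * P with hG
  set M : Matrix (Fin nb) (Fin nb) ℂ := A - c • G with hM
  obtain ⟨v, hv0, hvv⟩ := exists_eigenvector M μ hμ
  -- Hermitian facts
  have hPsym : Pbarᵀ = Pbar := hP.1
  have hPH : Pᴴ = P := by rw [hPdef, conjTranspose_real_map, hPsym]
  have hBH : Bᴴ = Bt := by rw [hBdef, hBtdef, conjTranspose_real_map]
  have hBtH : Btᴴ = B := by
    rw [hBtdef, conjTranspose_real_map, Matrix.transpose_transpose, hBdef]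
  have hAH : Aᴴ = Abarᵀ.map Complex.ofReal := by rw [hAdef, conjTranspose_real_map]
  have hGH : Gᴴ = P * B * Bt := by
    rw [hG, Matrix.conjTranspose_mul, Matrix.conjTranspose_mul, hPH, hBH, hBtH,
      Matrix.mul_assoc]
  -- the quadratic form
  set q : Matrix (Fin nb) (Fin nb) ℂ → ℂ :=
    fun X => dotProduct (star v) (X *ᵥ v) with hq
  have hq_sub : ∀ X Y, q (X - Y) = q X - q Y := by
    intro X Y; simp [hq, Matrix.sub_mulVec, dotProduct_sub]
  have hq_add : ∀ X Y, q (X + Y) = q X + q Y := by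
    intro X Y; simp [hq, Matrix.add_mulVec, dotProduct_add]
  have hq_smul : ∀ (z : ℂ) X, q (z • X) = z * q X := by
    intro z X; simp [hq, Matrix.smul_mulVec, dotProduct_smul, smul_eq_mul]
  -- q (X * M) = μ * q X
  have hq_right : ∀ X, q (X * M) = μ * q X := by
    intro X
    simp only [hq, ← Matrix.mulVec_mulVec, hvv, Matrix.mulVec_smul,
      dotProduct_smul, smul_eq_mul]
  -- adjoint move
  have hadj : ∀ {k : ℕ} (X : Matrix (Fin k) (Fin nb) ℂ) (w : Fin k → ℂ),
      dotProduct (star v) (Xᴴ *ᵥ w) = dotProduct (star (X *ᵥ v)) w := by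
    intro k X w
    rw [Matrix.star_mulVec, ← Matrix.dotProduct_mulVec]
  have hq_left : ∀ X, q (Mᴴ * X) = (starRingEnd ℂ) μ * q X := by
    intro X
    simp only [hq, ← Matrix.mulVec_mulVec]
    rw [hadj M (X *ᵥ v), hvv]
    simp [dotProduct, Finset.mul_sum, mul_assoc, mul_comm, mul_left_comm]
  -- scalar Lyapunov identity
  set s : ℂ := q P with hs
  set w : ℂ := q (P * B * Bt * P) with hw
  set t : ℂ := q 1 with ht
  -- use the ARE
  have hare' : q ((Abarᵀ.map Complex.ofReal) * P) + q (P * A) = w - t := by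
    have hm : (Abarᵀ.map Complex.ofReal) * P + P * A = P * B * Bt * P - 1 := by
      have := hareC
      have h2 : (Abarᵀ.map Complex.ofReal) * P + P * A - (P * B * Bt * P - 1) = 0 := by
        rw [← this]; abel
      exact sub_eq_zero.mp h2
    rw [← hq_add, hm, hq_sub]
  -- decompose q(P*M) and q(Mᴴ*P)
  have hPM : P * M = P * A - c • (P * B * Bt * P) := by
    rw [hM, Matrix.mul_sub, Matrix.mul_smul, hG]
    simp only [Matrix.mul_assoc]
  have hMHP : Mᴴ * P = (Abarᵀ.map Complex.ofReal) * P
      - (starRingEnd ℂ) c • (P * B * Bt * P) := by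
    rw [hM, Matrix.conjTranspose_sub, Matrix.conjTranspose_smul, hAH, hGH,
      Matrix.sub_mul, Matrix.smul_mul]
    rfl
  have eq1 : μ * s = q (P * A) - c * w := by
    rw [← hq_right P, hPM, hq_sub, hq_smul]
  have eq2 : (starRingEnd ℂ) μ * s = q ((Abarᵀ.map Complex.ofReal) * P)
      - (starRingEnd ℂ) c * w := by
    rw [← hq_left P, hMHP, hq_sub, hq_smul]
  have main : μ * s + (starRingEnd ℂ) μ * s = w - t - (c + (starRingEnd ℂ) c) * w := by
    rw [eq1, eq2]
    linear_combination hare'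
  -- real parts / positivity
  have hsre : 0 < s.re := by
    have := posdef_complexify Pbar hP v hv0
    simpa [hs, hq, hPdef] using this
  have htre : 0 < t.re := by
    have : t.re = ∑ j, Complex.normSq (v j) := by
      simp [ht, hq, dotProduct, Matrix.one_mulVec, Complex.re_sum,
        Complex.normSq_apply, Complex.mul_re]
    rw [this]
    obtain ⟨j, hj⟩ : ∃ j, v j ≠ 0 := by
      by_contra h; push_neg at h; exact hv0 (funext h)
    apply Finset.sum_pos' (fun k _ => Complex.normSq_nonneg _)
    exact ⟨j, Finset.mem_univ j, Complex.normSq_pos.mpr hj⟩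
  have hwre : 0 ≤ w.re := by
    have hfac : P * B * Bt * P = (Bt * P)ᴴ * (Bt * P) := by
      rw [Matrix.conjTranspose_mul, hPH, hBtH, Matrix.mul_assoc]
    have : w = dotProduct (star ((Bt * P) *ᵥ v)) ((Bt * P) *ᵥ v) := by
      rw [hw, hfac]
      show dotProduct (star v) (((Bt * P)ᴴ * (Bt * P)) *ᵥ v) = _
      rw [← Matrix.mulVec_mulVec, hadj (Bt * P) ((Bt * P) *ᵥ v)]
    rw [this]
    have : (dotProduct (star ((Bt * P) *ᵥ v)) ((Bt * P) *ᵥ v)).re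
        = ∑ j, Complex.normSq (((Bt * P) *ᵥ v) j) := by
      simp [dotProduct, Complex.re_sum, Complex.normSq_apply, Complex.mul_re]
    rw [this]
    exact Finset.sum_nonneg fun k _ => Complex.normSq_nonneg _
  -- take real parts of main
  have hcre : c.re = lc.re * σ⁻¹ := by
    simp [hc, Complex.mul_re]
  have hcre1 : 1 ≤ c.re := by
    rw [hcre]
    have hσi : 0 < σ⁻¹ := inv_pos.mpr hσ
    have := hσle i hi
    calc (1 : ℝ) = σ * σ⁻¹ := by field_simp
    _ ≤ lc.re * σ⁻¹ := by
        apply mul_le_mul_of_nonneg_right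
        · exact this
        · exact le_of_lt hσi
  have mainre : 2 * μ.re * s.re = w.re - t.re - 2 * c.re * w.re := by
    have h1 : μ * s + (starRingEnd ℂ) μ * s = ((2 * μ.re : ℝ) : ℂ) * s := by
      rw [← add_mul]
      congr 1
      exact_mod_cast Complex.add_conj μ
    have h2 : c + (starRingEnd ℂ) c = ((2 * c.re : ℝ) : ℂ) := by
      exact_mod_cast Complex.add_conj c
    rw [h1, h2] at main
    have hre := congrArg Complex.re main
    simpa [Complex.re_ofReal_mul, Complex.sub_re, mul_assoc] using hre
  -- conclude
  nlinarith [mainre, hsre, htre, hwre, hcre1, mul_nonneg (sub_nonneg.mpr hcre1) hwre]
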